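/- There exist a real number c and a point p ∈ ℝ² with both coordinates positive such that the polynomial f(x,y) = 1 + c·x·y + x²·y + x·y² ∈ ℝ[x,y] (whose Newton polygon is the triangle with vertices (0,0), (2,1), (1,2) and whose coefficients at the three vertices equal 1) satisfies: the set {(x,y) ∈ ℝ² : x > 0, y > 0, f(x,y) = 0} equals the singleton {p}, both partial derivatives of f vanish at p, and the determinant of the 2×2 Hessian matrix of f at p is positive (i.e., the intersection of the real cubic curve {f = 0} with the positive quadrant is a single solitary node). -/
import Mathlib


open MvPolynomial

/-- The cubic `f(x,y) = 1 + c·x·y + x²·y + x·y²`, whose Newton polygon is the triangle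
with vertices `(0,0)`, `(2,1)`, `(1,2)` and whose coefficients at the three vertices
equal `1`. -/
noncomputable def cubicF (c : ℝ) : MvPolynomial (Fin 2) ℝ :=
  1 + C c * (X 0 * X 1) + X 0 ^ 2 * X 1 + X 0 * X 1 ^ 2

lemma cubicF_key (x y : ℝ) (hx : 0 < x) (hy : 0 < y)
    (h : 1 - 3 * x * y + x^2 * y + x * y^2 = 0) : x = 1 ∧ y = 1 := by
  have hxy : 0 < x * y := mul_pos hx hy
  have hs : x + y < 3 := by nlinarith
  have hid : (x+y-2)^2*(x+y+1) + (x-y)^2*(3-x-y) = 0 := by linear_combination 4*h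
  have e1 : (x+y-2)^2*(x+y+1) = 0 := by
    nlinarith [sq_nonneg (x+y-2), sq_nonneg (x-y),
      mul_nonneg (sq_nonneg (x-y)) (by linarith : (0:ℝ) ≤ 3-x-y),
      mul_nonneg (sq_nonneg (x+y-2)) (by linarith : (0:ℝ) ≤ x+y+1)]
  have hs2 : x + y = 2 := by
    rcases mul_eq_zero.mp e1 with h1 | h1
    · have := pow_eq_zero_iff (n := 2) (by norm_num) |>.mp h1; linarith
    · linarith
  have e2 : (x - y)^2 = 0 := by nlinarith
  have : x = y := by nlinarith [pow_eq_zero_iff (n := 2) (by norm_num : 2 ≠ 0) |>.mp e2]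
  constructor <;> linarith

lemma pd2 (i : Fin 2) : (pderiv i) (2 : MvPolynomial (Fin 2) ℝ) = 0 := by
  rw [show (2 : MvPolynomial (Fin 2) ℝ) = C 2 from (map_ofNat C 2).symm, pderiv_C]

theorem stmt_8 :
    ∃ (c : ℝ) (p : Fin 2 → ℝ), 0 < p 0 ∧ 0 < p 1 ∧
      {q : Fin 2 → ℝ | 0 < q 0 ∧ 0 < q 1 ∧ MvPolynomial.eval q (cubicF c) = 0} = {p} ∧
      MvPolynomial.eval p (pderiv 0 (cubicF c)) = 0 ∧
      MvPolynomial.eval p (pderiv 1 (cubicF c)) = 0 ∧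
      0 < Matrix.det
        !![MvPolynomial.eval p (pderiv 0 (pderiv 0 (cubicF c))),
           MvPolynomial.eval p (pderiv 0 (pderiv 1 (cubicF c)));
           MvPolynomial.eval p (pderiv 1 (pderiv 0 (cubicF c))),
           MvPolynomial.eval p (pderiv 1 (pderiv 1 (cubicF c)))] := by
  refine ⟨-3, ![1, 1], by norm_num, by norm_num, ?_, ?_, ?_, ?_⟩
  · ext q
    simp only [Set.mem_setOf_eq, Set.mem_singleton_iff]
    constructor
    · rintro ⟨hx, hy, h⟩
      have h' : 1 - 3 * q 0 * q 1 + (q 0)^2 * q 1 + q 0 * (q 1)^2 = 0 := by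
        simp [cubicF] at h; linarith [h]
      obtain ⟨h0, h1⟩ := cubicF_key (q 0) (q 1) hx hy h'
      funext i
      fin_cases i <;> simp [h0, h1]
    · rintro rfl
      refine ⟨by norm_num, by norm_num, ?_⟩
      simp [cubicF]
      norm_num
  · simp [cubicF, pderiv_mul, pderiv_pow]; norm_num
  · simp [cubicF, pderiv_mul, pderiv_pow]; norm_num
  · simp [cubicF, pderiv_mul, pderiv_pow, pd2, Matrix.det_fin_two_of]
    norm_num
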